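/- Let n ≥ 2 be an integer and 0 < β ≤ 1. There is a constant C, depending only on n and β, such that for every δ ∈ (0,1]: ∫₀¹ ∫₀¹ r · t^{2n−5+β} · (δ + r + t²)^{−(n+1)} dr dt ≤ C · δ^{β/2 − 1}. -/

import Mathlib

open MeasureTheory

open Real Set in
private lemma aux_inner_integral (n : ℕ) (hn : 2 ≤ n) {a : ℝ} (ha : 0 < a) :
    (∫ r in Set.Ioo (0 : ℝ) 1, r / (r + a) ^ (n + 1)) ≤ a ^ ((1 : ℝ) - n) := by
  have hn2 : (2 : ℝ) ≤ (n : ℝ) := by exact_mod_cast hn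
  have h1 : ∀ r ∈ Set.Icc (0 : ℝ) 1, (0 : ℝ) < r + a := fun r hr => by
    have := hr.1; linarith
  have hint1 : IntegrableOn (fun r : ℝ => r / (r + a) ^ (n + 1)) (Set.Icc 0 1) := by
    apply ContinuousOn.integrableOn_Icc
    exact ContinuousOn.div continuousOn_id (by fun_prop)
      (fun r hr => pow_ne_zero _ (h1 r hr).ne')
  have hint2 : IntegrableOn (fun r : ℝ => (r + a) ^ (-(n : ℝ))) (Set.Icc 0 1) := by
    apply ContinuousOn.integrableOn_Icc
    exact ContinuousOn.rpow_const (by fun_prop) (fun r hr => Or.inl (h1 r hr).ne')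
  have key : (∫ r in Set.Ioo (0 : ℝ) 1, r / (r + a) ^ (n + 1))
      ≤ ∫ r in Set.Ioo (0 : ℝ) 1, (r + a) ^ (-(n : ℝ)) := by
    apply setIntegral_mono_on (hint1.mono_set Set.Ioo_subset_Icc_self)
      (hint2.mono_set Set.Ioo_subset_Icc_self) measurableSet_Ioo
    intro r hr
    have hra : 0 < r + a := by have := hr.1; linarith
    have h2 : r / (r + a) ^ (n + 1) ≤ (r + a) / (r + a) ^ (n + 1) := by
      gcongr; linarith
    refine h2.trans (le_of_eq ?_)
    rw [Real.rpow_neg hra.le, Real.rpow_natCast, pow_succ]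
    field_simp
  have hval : (∫ r in Set.Ioo (0 : ℝ) 1, (r + a) ^ (-(n : ℝ)))
      = ((1 + a) ^ (-(n : ℝ) + 1) - a ^ (-(n : ℝ) + 1)) / (-(n : ℝ) + 1) := by
    rw [← integral_Ioc_eq_integral_Ioo,
      ← intervalIntegral.integral_of_le (by norm_num : (0 : ℝ) ≤ 1),
      intervalIntegral.integral_comp_add_right (fun x => x ^ (-(n : ℝ))) a,
      zero_add]
    rw [integral_rpow (Or.inr ⟨by intro hq; rw [neg_eq_iff_eq_neg] at hq; norm_num at hq; linarith,
      by rw [Set.uIcc_of_le (by linarith : a ≤ 1 + a)];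
         exact fun hmem => absurd hmem.1 (not_le.mpr ha)⟩)]
  have hfin : ((1 + a) ^ (-(n : ℝ) + 1) - a ^ (-(n : ℝ) + 1)) / (-(n : ℝ) + 1)
      ≤ a ^ ((1 : ℝ) - n) := by
    have he : (-(n : ℝ) + 1) = (1 : ℝ) - n := by ring
    rw [he]
    have hden : (0 : ℝ) < (n : ℝ) - 1 := by linarith
    have heq : ((1 + a) ^ ((1 : ℝ) - n) - a ^ ((1 : ℝ) - n)) / ((1 : ℝ) - n)
        = (a ^ ((1 : ℝ) - n) - (1 + a) ^ ((1 : ℝ) - n)) / ((n : ℝ) - 1) := by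
      rw [div_eq_div_iff (by linarith) (by linarith)]; ring
    rw [heq]
    have h3 : (a ^ ((1 : ℝ) - n) - (1 + a) ^ ((1 : ℝ) - n)) / ((n : ℝ) - 1)
        ≤ a ^ ((1 : ℝ) - n) / ((n : ℝ) - 1) := by
      gcongr
      have : (0 : ℝ) ≤ (1 + a) ^ ((1 : ℝ) - n) := Real.rpow_nonneg (by linarith) _
      linarith
    refine h3.trans ?_
    exact div_le_self (Real.rpow_nonneg ha.le _) (by linarith)
  calc (∫ r in Set.Ioo (0 : ℝ) 1, r / (r + a) ^ (n + 1))
      ≤ ∫ r in Set.Ioo (0 : ℝ) 1, (r + a) ^ (-(n : ℝ)) := key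
    _ = ((1 + a) ^ (-(n : ℝ) + 1) - a ^ (-(n : ℝ) + 1)) / (-(n : ℝ) + 1) := hval
    _ ≤ a ^ ((1 : ℝ) - n) := hfin

/-- the model integral `∫₀¹∫₀¹ r t^{2n−5+β} (δ+r+t²)^{-(n+1)} dr dt`
is bounded by `C · δ^{β/2 − 1}`, uniformly for `δ ∈ (0,1]`. -/
theorem model_integral_distance_weight (n : ℕ) (hn : 2 ≤ n)
    (β : ℝ) (hβ0 : 0 < β) (hβ1 : β ≤ 1) :
    ∃ C : ℝ, 0 < C ∧ ∀ δ : ℝ, 0 < δ → δ ≤ 1 →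
      (∫ t in Set.Ioo (0 : ℝ) 1, ∫ r in Set.Ioo (0 : ℝ) 1,
          r * t ^ (2 * (n : ℝ) - 5 + β) / (δ + r + t ^ 2) ^ (n + 1))
        ≤ C * δ ^ (β / 2 - 1) := by
  have hn2 : (2 : ℝ) ≤ (n : ℝ) := by exact_mod_cast hn
  set p : ℝ := 2 * (n : ℝ) - 5 + β with hp_def
  have hp1 : -1 < p := by rw [hp_def]; linarith
  have hp1' : (0 : ℝ) < p + 1 := by linarith
  have h2β : (0 : ℝ) < 2 - β := by linarith
  refine ⟨1 / (p + 1) + 1 / (2 - β), by positivity, ?_⟩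
  intro δ hδ0 hδ1
  set s := Real.sqrt δ with hs_def
  have hs0 : 0 < s := Real.sqrt_pos.mpr hδ0
  have hs1 : s ≤ 1 := by
    rw [hs_def, show (1 : ℝ) = Real.sqrt 1 by simp]
    exact Real.sqrt_le_sqrt hδ1
  have hsδ : s = δ ^ ((1 : ℝ) / 2) := Real.sqrt_eq_rpow δ
  have h1n : (1 : ℝ) - n ≤ 0 := by linarith
  have hdpos : ∀ t : ℝ, 0 < δ + t ^ 2 := fun t => by positivity
  have hbound1 : ∀ t : ℝ, (δ + t ^ 2) ^ ((1 : ℝ) - n) ≤ δ ^ ((1 : ℝ) - n) := fun t =>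
    Real.rpow_le_rpow_of_nonpos hδ0 (by nlinarith [sq_nonneg t]) h1n
  -- integrability of t ^ p on Ioo 0 c for 0 ≤ c
  have hrpow_int : ∀ c : ℝ, 0 ≤ c → IntegrableOn (fun t : ℝ => t ^ p) (Set.Ioo 0 c) := by
    intro c hc
    have := intervalIntegral.intervalIntegrable_rpow' (a := 0) (b := c) hp1
    rwa [intervalIntegrable_iff_integrableOn_Ioo_of_le hc] at this
  -- the majorant h
  set h : ℝ → ℝ := fun t => t ^ p * (δ + t ^ 2) ^ ((1 : ℝ) - n) with hh_def
  have hcont : ContinuousOn h (Set.Ioo (0 : ℝ) 1) := by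
    apply ContinuousOn.mul
    · exact continuousOn_id.rpow_const (fun t ht => Or.inl (ne_of_gt ht.1))
    · exact ContinuousOn.rpow_const (by fun_prop) (fun t _ => Or.inl (hdpos t).ne')
  have hle : ∀ t : ℝ, 0 < t → h t ≤ δ ^ ((1 : ℝ) - n) * t ^ p := by
    intro t ht
    calc h t ≤ t ^ p * δ ^ ((1 : ℝ) - n) :=
          mul_le_mul_of_nonneg_left (hbound1 t) (Real.rpow_nonneg ht.le p)
      _ = δ ^ ((1 : ℝ) - n) * t ^ p := mul_comm _ _
  have hnonneg : ∀ t : ℝ, 0 < t → 0 ≤ h t := fun t ht =>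
    mul_nonneg (Real.rpow_nonneg ht.le _) (Real.rpow_nonneg (hdpos t).le _)
  have hInt : IntegrableOn h (Set.Ioo (0 : ℝ) 1) := by
    apply Integrable.mono' (((hrpow_int 1 zero_le_one).const_mul (δ ^ ((1 : ℝ) - n))))
      (hcont.aestronglyMeasurable measurableSet_Ioo)
    filter_upwards [ae_restrict_mem measurableSet_Ioo] with t ht
    rw [Real.norm_eq_abs, abs_of_nonneg (hnonneg t ht.1)]
    exact hle t ht.1
  -- inner integral bound
  have hinner : ∀ t ∈ Set.Ioo (0 : ℝ) 1,
      (∫ r in Set.Ioo (0 : ℝ) 1, r * t ^ p / (δ + r + t ^ 2) ^ (n + 1)) ≤ h t := by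
    intro t ht
    have ha : 0 < δ + t ^ 2 := hdpos t
    have heq : (fun r : ℝ => r * t ^ p / (δ + r + t ^ 2) ^ (n + 1))
        = fun r : ℝ => t ^ p * (r / (r + (δ + t ^ 2)) ^ (n + 1)) := by
      funext r
      rw [show δ + r + t ^ 2 = r + (δ + t ^ 2) by ring]
      ring
    rw [heq, MeasureTheory.integral_const_mul]
    exact mul_le_mul_of_nonneg_left (aux_inner_integral n hn ha)
      (Real.rpow_nonneg ht.1.le p)
  -- outer bound by the majorant
  have step1 : (∫ t in Set.Ioo (0 : ℝ) 1, ∫ r in Set.Ioo (0 : ℝ) 1,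
        r * t ^ p / (δ + r + t ^ 2) ^ (n + 1)) ≤ ∫ t in Set.Ioo (0 : ℝ) 1, h t := by
    apply integral_mono_of_nonneg ?_ hInt ?_
    · filter_upwards [ae_restrict_mem measurableSet_Ioo] with t ht
      apply setIntegral_nonneg measurableSet_Ioo
      intro r hr
      have htp : 0 ≤ t ^ p := Real.rpow_nonneg ht.1.le p
      exact div_nonneg (mul_nonneg hr.1.le htp) (pow_nonneg (by nlinarith [sq_nonneg t, hr.1, hδ0]) _)
    · filter_upwards [ae_restrict_mem measurableSet_Ioo] with t ht
      exact hinner t ht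
  -- split the majorant integral at s = √δ
  have hIu : Set.Ioo (0 : ℝ) 1 = Set.Ioo 0 s ∪ Set.Ico s 1 :=
    (Set.Ioo_union_Ico_eq_Ioo hs0 hs1).symm
  have hdisj : Disjoint (Set.Ioo (0 : ℝ) s) (Set.Ico s 1) := by
    apply Set.disjoint_left.mpr
    intro x hx1 hx2
    exact absurd hx2.1 (not_le.mpr hx1.2)
  have hIntA : IntegrableOn h (Set.Ioo 0 s) :=
    hInt.mono_set (by rw [hIu]; exact Set.subset_union_left)
  have hIntB : IntegrableOn h (Set.Ico s 1) :=
    hInt.mono_set (by rw [hIu]; exact Set.subset_union_right)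
  have hsplit : (∫ t in Set.Ioo (0 : ℝ) 1, h t)
      = (∫ t in Set.Ioo (0 : ℝ) s, h t) + ∫ t in Set.Ico s 1, h t := by
    rw [hIu]
    exact setIntegral_union hdisj measurableSet_Ico hIntA hIntB
  -- exponent arithmetic
  have hexpA : ((1 : ℝ) - n) + (1 / 2) * (p + 1) = β / 2 - 1 := by
    rw [hp_def]; ring
  have hexpB : ((1 : ℝ) / 2) * (β - 2) = β / 2 - 1 := by ring
  -- Part A
  have hA : (∫ t in Set.Ioo (0 : ℝ) s, h t) ≤ δ ^ (β / 2 - 1) * (1 / (p + 1)) := by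
    have hmono : (∫ t in Set.Ioo (0 : ℝ) s, h t)
        ≤ ∫ t in Set.Ioo (0 : ℝ) s, δ ^ ((1 : ℝ) - n) * t ^ p := by
      apply setIntegral_mono_on hIntA ((hrpow_int s hs0.le).const_mul _) measurableSet_Ioo
      intro t ht
      exact hle t ht.1
    have hval : (∫ t in Set.Ioo (0 : ℝ) s, t ^ p) = s ^ (p + 1) / (p + 1) := by
      rw [← integral_Ioc_eq_integral_Ioo, ← intervalIntegral.integral_of_le hs0.le,
        integral_rpow (Or.inl hp1), Real.zero_rpow (by linarith : p + 1 ≠ 0), sub_zero]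
    refine hmono.trans (le_of_eq ?_)
    rw [MeasureTheory.integral_const_mul, hval, hsδ, ← Real.rpow_mul hδ0.le,
      div_eq_mul_one_div, ← mul_assoc, ← Real.rpow_add hδ0, hexpA]
  -- Part B
  have hmajB : ∀ t ∈ Set.Ico s 1, h t ≤ t ^ (β - 3) := by
    intro t ht
    have ht0 : 0 < t := lt_of_lt_of_le hs0 ht.1
    have h2 : (δ + t ^ 2) ^ ((1 : ℝ) - n) ≤ (t ^ 2) ^ ((1 : ℝ) - n) := by
      have hts : s ≤ t := ht.1
      have hδt : δ ≤ t ^ 2 := by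
        have := Real.sq_sqrt hδ0.le
        nlinarith
      exact Real.rpow_le_rpow_of_nonpos (by positivity) (by linarith) h1n
    calc h t ≤ t ^ p * (t ^ 2) ^ ((1 : ℝ) - n) :=
          mul_le_mul_of_nonneg_left h2 (Real.rpow_nonneg ht0.le p)
      _ = t ^ (β - 3) := by
          rw [← Real.rpow_natCast t 2, ← Real.rpow_mul ht0.le, ← Real.rpow_add ht0]
          congr 1
          rw [hp_def]; push_cast; ring
  have hintB2 : IntegrableOn (fun t : ℝ => t ^ (β - 3)) (Set.Ico s 1) := by
    apply (ContinuousOn.integrableOn_Icc ?_).mono_set Set.Ico_subset_Icc_self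
    exact continuousOn_id.rpow_const (fun t ht => Or.inl (lt_of_lt_of_le hs0 ht.1).ne')
  have hB : (∫ t in Set.Ico s 1, h t) ≤ δ ^ (β / 2 - 1) * (1 / (2 - β)) := by
    have hmono := setIntegral_mono_on hIntB hintB2 measurableSet_Ico hmajB
    have hval : (∫ t in Set.Ico s 1, t ^ (β - 3))
        = ((1 : ℝ) ^ (β - 2) - s ^ (β - 2)) / (β - 2) := by
      rw [MeasureTheory.integral_Ico_eq_integral_Ioo, ← integral_Ioc_eq_integral_Ioo,
        ← intervalIntegral.integral_of_le hs1,
        integral_rpow (Or.inr ⟨by intro hq; nlinarith [hq],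
          by rw [Set.uIcc_of_le hs1]; exact fun hmem => absurd hmem.1 (not_le.mpr hs0)⟩)]
      rw [show β - 3 + 1 = β - 2 by ring]
    have hsβ : s ^ (β - 2) = δ ^ (β / 2 - 1) := by
      rw [hsδ, ← Real.rpow_mul hδ0.le, hexpB]
    refine hmono.trans ?_
    rw [hval, Real.one_rpow]
    have hnum : (1 - s ^ (β - 2)) / (β - 2) = (s ^ (β - 2) - 1) / (2 - β) := by
      rw [div_eq_div_iff (by linarith) (by linarith)]; ring
    rw [hnum, hsβ]
    rw [div_eq_mul_one_div]
    have : δ ^ (β / 2 - 1) - 1 ≤ δ ^ (β / 2 - 1) := by linarith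
    exact mul_le_mul_of_nonneg_right (by linarith) (by positivity)
  -- combine
  calc (∫ t in Set.Ioo (0 : ℝ) 1, ∫ r in Set.Ioo (0 : ℝ) 1,
        r * t ^ p / (δ + r + t ^ 2) ^ (n + 1))
      ≤ ∫ t in Set.Ioo (0 : ℝ) 1, h t := step1
    _ = (∫ t in Set.Ioo (0 : ℝ) s, h t) + ∫ t in Set.Ico s 1, h t := hsplit
    _ ≤ δ ^ (β / 2 - 1) * (1 / (p + 1)) + δ ^ (β / 2 - 1) * (1 / (2 - β)) := add_le_add hA hB
    _ = (1 / (p + 1) + 1 / (2 - β)) * δ ^ (β / 2 - 1) := by ring
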